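/- Let a_n, B_n, b_n be positive real sequences with a_n/b_n bounded. If k_n → ∞, B_n/n → ∞, liminf_n (k_n ζ_{1,k_n}/ζ_{k_n,k_n}) > 0 and B_n ≤ M_n, then ((1/B_n − 1/M_n)·ζ_{k_n,k_n}) / ((k_n^2/n)·ζ_{1,k_n} + (1/B_n)·ζ_{k_n,k_n}) → 0 as n → ∞. -/

import Mathlib

open Filter

/-- asymptotic negligibility of the Monte-Carlo variance term. If `k_n → ∞`,
`B_n/n → ∞`, `liminf (k_n ζ_{1,k_n}/ζ_{k_n,k_n}) > 0` and `B_n ≤ M_n = C(n,k_n)`, then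
`((1/B_n − 1/M_n)·ζ_{k_n,k_n}) / ((k_n²/n)·ζ_{1,k_n} + (1/B_n)·ζ_{k_n,k_n}) → 0`. -/
theorem monte_carlo_term_negligible
    (a b : ℕ → ℝ) (ha : ∀ n, 0 < a n) (hb : ∀ n, 0 < b n)
    (hab : ∃ C : ℝ, ∀ n, a n / b n ≤ C)
    (k B : ℕ → ℕ) (hkpos : ∀ n, 0 < k n) (hBpos : ∀ n, 0 < B n)
    (ζ₁ ζₖ : ℕ → ℝ) (hζ₁ : ∀ n, 0 ≤ ζ₁ n) (hζₖ : ∀ n, 0 ≤ ζₖ n)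
    (hk : Tendsto (fun n => (k n : ℝ)) atTop atTop)
    (hB : Tendsto (fun n => (B n : ℝ) / n) atTop atTop)
    (hliminf : 0 < Filter.liminf (fun n => (k n : ℝ) * ζ₁ n / ζₖ n) atTop)
    (hBM : ∀ n, B n ≤ n.choose (k n)) :
    Tendsto (fun n =>
        ((1 / (B n : ℝ) - 1 / (n.choose (k n) : ℝ)) * ζₖ n) /
          (((k n : ℝ) ^ 2 / n) * ζ₁ n + (1 / (B n : ℝ)) * ζₖ n))
      atTop (nhds 0) := by
  set L := Filter.liminf (fun n => (k n : ℝ) * ζ₁ n / ζₖ n) atTop with hL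
  set ε := L / 2 with hεdef
  have hε : 0 < ε := half_pos hliminf
  have hev : ∀ᶠ n in atTop, ε < (k n : ℝ) * ζ₁ n / ζₖ n :=
    eventually_lt_of_lt_liminf (half_lt_self hliminf)
      ⟨0, Filter.eventually_map.2 (Eventually.of_forall fun n => div_nonneg (mul_nonneg (Nat.cast_nonneg _) (hζ₁ n)) (hζₖ n))⟩
  -- the dominating sequence
  have hg : Tendsto (fun n : ℕ => ε⁻¹ * (((n : ℝ) / B n) * (k n : ℝ)⁻¹)) atTop (nhds 0) := by
    have h1 : Tendsto (fun n : ℕ => ((n : ℝ) / B n)) atTop (nhds 0) := by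
      refine hB.inv_tendsto_atTop.congr fun n => ?_
      simp [inv_div]
    have h2 : Tendsto (fun n => ((k n : ℝ))⁻¹) atTop (nhds 0) := hk.inv_tendsto_atTop
    simpa using (h1.mul h2).const_mul ε⁻¹
  apply squeeze_zero' (g := fun n : ℕ => ε⁻¹ * (((n : ℝ) / B n) * (k n : ℝ)⁻¹))
  · filter_upwards [hev, eventually_ge_atTop 1] with n hn hn1
    have hBpos' : (0 : ℝ) < B n := by exact_mod_cast hBpos n
    have hMpos : (0 : ℝ) < (n.choose (k n) : ℝ) := by
      exact_mod_cast (hBpos n).trans_le (hBM n)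
    have hBM' : (1 : ℝ) / (n.choose (k n) : ℝ) ≤ 1 / B n :=
      one_div_le_one_div_of_le hBpos' (by exact_mod_cast hBM n)
    have hnum : 0 ≤ (1 / (B n : ℝ) - 1 / (n.choose (k n) : ℝ)) * ζₖ n :=
      mul_nonneg (by linarith) (hζₖ n)
    have hden : 0 ≤ ((k n : ℝ) ^ 2 / n) * ζ₁ n + (1 / (B n : ℝ)) * ζₖ n :=
      add_nonneg (mul_nonneg (by positivity) (hζ₁ n)) (mul_nonneg (by positivity) (hζₖ n))
    exact div_nonneg hnum hden
  · filter_upwards [hev, eventually_ge_atTop 1] with n hn hn1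
    have hBpos' : (0 : ℝ) < B n := by exact_mod_cast hBpos n
    have hkpos' : (0 : ℝ) < k n := by exact_mod_cast hkpos n
    have hnpos : (0 : ℝ) < n := by exact_mod_cast hn1
    have hMpos : (0 : ℝ) < (n.choose (k n) : ℝ) := by
      exact_mod_cast (hBpos n).trans_le (hBM n)
    have hζₖpos : 0 < ζₖ n := by
      rcases lt_or_eq_of_le (hζₖ n) with h | h
      · exact h
      · rw [← h, div_zero] at hn; exact absurd hn (not_lt.2 hε.le)
    have hεζ : ε * ζₖ n < (k n : ℝ) * ζ₁ n := (lt_div_iff₀ hζₖpos).mp hn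
    have hζ₁pos : 0 < ζ₁ n := by
      by_contra h
      push_neg at h
      nlinarith
    have hBM' : (1 : ℝ) / (n.choose (k n) : ℝ) ≤ 1 / B n :=
      one_div_le_one_div_of_le hBpos' (by exact_mod_cast hBM n)
    have hnum : (1 / (B n : ℝ) - 1 / (n.choose (k n) : ℝ)) * ζₖ n ≤ (1 / (B n : ℝ)) * ζₖ n := by
      have : (1 / (B n : ℝ) - 1 / (n.choose (k n) : ℝ)) ≤ 1 / B n := by
        have : 0 ≤ 1 / (n.choose (k n) : ℝ) := by positivity
        linarith
      exact mul_le_mul_of_nonneg_right this (hζₖ n)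
    have hD'pos : 0 < ((k n : ℝ) ^ 2 / n) * ζ₁ n := by positivity
    have hDD : ((k n : ℝ) ^ 2 / n) * ζ₁ n ≤
        ((k n : ℝ) ^ 2 / n) * ζ₁ n + (1 / (B n : ℝ)) * ζₖ n := by
      have : 0 ≤ (1 / (B n : ℝ)) * ζₖ n := by positivity
      linarith
    have step1 : ((1 / (B n : ℝ) - 1 / (n.choose (k n) : ℝ)) * ζₖ n) /
          (((k n : ℝ) ^ 2 / n) * ζ₁ n + (1 / (B n : ℝ)) * ζₖ n) ≤
        ((1 / (B n : ℝ)) * ζₖ n) / (((k n : ℝ) ^ 2 / n) * ζ₁ n) :=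
      div_le_div₀ (by positivity) hnum hD'pos hDD
    refine step1.trans ?_
    rw [div_le_iff₀ hD'pos]
    have key : ζₖ n ≤ ε⁻¹ * ((k n : ℝ) * ζ₁ n) := by
      have h := mul_le_mul_of_nonneg_left hεζ.le (inv_pos.2 hε).le
      rwa [← mul_assoc, inv_mul_cancel₀ hε.ne', one_mul] at h
    calc (1 / (B n : ℝ)) * ζₖ n ≤ (1 / (B n : ℝ)) * (ε⁻¹ * ((k n : ℝ) * ζ₁ n)) :=
          mul_le_mul_of_nonneg_left key (by positivity)
      _ = ε⁻¹ * (((n : ℝ) / B n) * (k n : ℝ)⁻¹) * (((k n : ℝ) ^ 2 / n) * ζ₁ n) := by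
          field_simp
  · exact hg
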